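/- arXiv:1309.1601 — 5 statements merged into one kernel-verified Lean document; each statement's English description precedes it below -/
import Mathlib

section
/- Let $p,q$ be positive integers and $c,d,a,b>0$ satisfy $a^2/c^2+b^2/d^2=1$. Set $E = (p c^4/a^4 + q d^4/b^4) - \frac{1}{a^2/c^4 + b^2/d^4}\left(\frac{c^2}{a^2}+\frac{d^2}{b^2}\right)\left(\frac{p}{c^2}+\frac{q}{d^2}\right)$. Then $E = 0$ holds when $a^2 = c^3/(c+d)$ and $b^2 = d^3/(c+d)$. -/
theorem stmt_2 (p q : ℕ) (hp : 0 < p) (hq : 0 < q) (c d a b : ℝ)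
    (hc : 0 < c) (hd : 0 < d) (ha : 0 < a) (hb : 0 < b)
    (hcon : a ^ 2 / c ^ 2 + b ^ 2 / d ^ 2 = 1)
    (ha2 : a ^ 2 = c ^ 3 / (c + d)) (hb2 : b ^ 2 = d ^ 3 / (c + d)) :
    ((p : ℝ) * c ^ 4 / a ^ 4 + (q : ℝ) * d ^ 4 / b ^ 4) -
      (1 / (a ^ 2 / c ^ 4 + b ^ 2 / d ^ 4)) * (c ^ 2 / a ^ 2 + d ^ 2 / b ^ 2) *
        ((p : ℝ) / c ^ 2 + (q : ℝ) / d ^ 2) = 0 := by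
  have hcd : (0:ℝ) < c + d := by linarith
  have ha4 : a ^ 4 = (c ^ 3 / (c + d)) ^ 2 := by rw [← ha2]; ring
  have hb4 : b ^ 4 = (d ^ 3 / (c + d)) ^ 2 := by rw [← hb2]; ring
  rw [ha2, hb2, ha4, hb4]
  have h1 : c ^ 3 / (c + d) / c ^ 4 + d ^ 3 / (c + d) / d ^ 4 ≠ 0 := by
    positivity
  field_simp
  ring
end

section
/- Let $c,d,a,b>0$ with $a^2/c^2 + b^2/d^2 = 1$. Then $\frac{c^4}{a^4} - \frac{1}{a^2/c^4+b^2/d^4}\left(\frac{c^2}{a^2}+\frac{d^2}{b^2}\right)\frac{1}{c^2} = 0$ if and only if $a^2 = c^3/(c+d)$ and $b^2 = d^3/(c+d)$. -/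
theorem stmt_3 (c d a b : ℝ) (hc : 0 < c) (hd : 0 < d) (ha : 0 < a) (hb : 0 < b)
    (hcon : a ^ 2 / c ^ 2 + b ^ 2 / d ^ 2 = 1) :
    c ^ 4 / a ^ 4 -
      (1 / (a ^ 2 / c ^ 4 + b ^ 2 / d ^ 4)) * (c ^ 2 / a ^ 2 + d ^ 2 / b ^ 2) * (1 / c ^ 2) = 0 ↔
      a ^ 2 = c ^ 3 / (c + d) ∧ b ^ 2 = d ^ 3 / (c + d) := by
  have hc0 : c ≠ 0 := hc.ne'
  have hd0 : d ≠ 0 := hd.ne'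
  have ha0 : a ≠ 0 := ha.ne'
  have hb0 : b ≠ 0 := hb.ne'
  have hcd : c + d ≠ 0 := by positivity
  have hden : a ^ 2 / c ^ 4 + b ^ 2 / d ^ 4 ≠ 0 := by positivity
  have hcon' : a ^ 2 * d ^ 2 + b ^ 2 * c ^ 2 = c ^ 2 * d ^ 2 := by
    field_simp at hcon; linarith
  have hpos : (0:ℝ) < c ^ 3 * b ^ 2 + d ^ 3 * a ^ 2 := by positivity
  constructor
  · intro h
    field_simp at h
    have h'' : a ^ 2 * c ^ 4 * ((c ^ 3 * b ^ 2 - d ^ 3 * a ^ 2) * (c ^ 3 * b ^ 2 + d ^ 3 * a ^ 2)) = 0 := by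
      linear_combination a ^ 2 * c ^ 2 * h
    have hac : a ^ 2 * c ^ 4 ≠ 0 := by positivity
    have h' := (mul_eq_zero.mp h'').resolve_left hac
    have key : c ^ 3 * b ^ 2 = d ^ 3 * a ^ 2 := by
      rcases mul_eq_zero.mp h' with h1 | h1
      · linarith
      · linarith
    constructor
    · rw [eq_div_iff hcd]
      have hA : a ^ 2 * (c + d) * d ^ 2 = c ^ 3 * d ^ 2 := by
        linear_combination c * hcon' - key
      have := mul_right_cancel₀ (pow_ne_zero 2 hd0) hA
      linarith
    · rw [eq_div_iff hcd]
      have hB : b ^ 2 * (c + d) * c ^ 2 = d ^ 3 * c ^ 2 := by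
        linear_combination d * hcon' + key
      have := mul_right_cancel₀ (pow_ne_zero 2 hc0) hB
      linarith
  · rintro ⟨h1, h2⟩
    have key : c ^ 3 * b ^ 2 = d ^ 3 * a ^ 2 := by
      rw [h1, h2]; field_simp
    field_simp
    linear_combination (c ^ 2 * (c ^ 3 * b ^ 2 + d ^ 3 * a ^ 2)) * key
end

section
/- Let $p,q\in\mathbb{Z}_{>0}$ and $c,d>0$ with $c=p$ and $d=q$. Then the minimality radii $a^2 = c^2 p/(p+q)$, $b^2 = d^2 q/(p+q)$ and the biharmonicity radii $a^2 = c^3/(c+d)$, $b^2 = d^3/(c+d)$ coincide. Consequently, in the ellipsoid $Q^{p+q+1}(p,q)$ there is no proper biharmonic generalized Clifford torus of the form $S^p(a)\times S^q(b)$. -/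
theorem stmt_14 (p q : ℕ) (hp : 0 < p) (hq : 0 < q) (c d : ℝ)
    (hc : c = (p : ℝ)) (hd : d = (q : ℝ)) :
    c ^ 2 * p / (p + q) = c ^ 3 / (c + d) ∧
      d ^ 2 * q / (p + q) = d ^ 3 / (c + d) ∧
      ∀ a b : ℝ, a ^ 2 = c ^ 3 / (c + d) → b ^ 2 = d ^ 3 / (c + d) →
        a ^ 2 = c ^ 2 * p / (p + q) ∧ b ^ 2 = d ^ 2 * q / (p + q) := by
  subst hc hd
  have h1 : ((p : ℝ)) ^ 2 * p / (p + q) = (p : ℝ) ^ 3 / ((p : ℝ) + q) := by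
    push_cast
    ring
  have h2 : ((q : ℝ)) ^ 2 * q / (p + q) = (q : ℝ) ^ 3 / ((p : ℝ) + q) := by
    push_cast
    ring
  exact ⟨h1, h2, fun a b ha hb => ⟨ha.trans h1.symm, hb.trans h2.symm⟩⟩
end

section
/- Let $c,d>0$, $p\in\mathbb{Z}_{>0}$, and $a,b$ with $a>0$, $0<|b|<d$, $a^2/c^2+b^2/d^2=1$. Then $\frac{p c^4}{a^4} - \frac{1}{a^2/c^4+b^2/d^4}\left(\frac{c^2}{a^2}+\frac{d^2}{b^2}\right)\frac{p}{c^2} = 0$ if and only if $a = c\sqrt{c/(c+d)}$ and $b = \pm d\sqrt{d/(c+d)}$. -/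
theorem stmt_15 (c d : ℝ) (hc : 0 < c) (hd : 0 < d) (p : ℕ) (hp : 0 < p)
    (a b : ℝ) (ha : 0 < a) (hb0 : 0 < |b|) (hbd : |b| < d)
    (hcon : a ^ 2 / c ^ 2 + b ^ 2 / d ^ 2 = 1) :
    (p : ℝ) * c ^ 4 / a ^ 4 -
        (1 / (a ^ 2 / c ^ 4 + b ^ 2 / d ^ 4)) * (c ^ 2 / a ^ 2 + d ^ 2 / b ^ 2) *
          ((p : ℝ) / c ^ 2) = 0 ↔
      a = c * Real.sqrt (c / (c + d)) ∧
        (b = d * Real.sqrt (d / (c + d)) ∨ b = -(d * Real.sqrt (d / (c + d)))) := by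
  have hbne : b ≠ 0 := by
    intro hb; rw [hb] at hb0; simp at hb0
  have hane : a ≠ 0 := ne_of_gt ha
  have hcne : c ≠ 0 := ne_of_gt hc
  have hdne : d ≠ 0 := ne_of_gt hd
  have hcd : (0:ℝ) < c + d := by linarith
  have hpR : (0:ℝ) < (p:ℝ) := by exact_mod_cast hp
  have hD : 0 < a ^ 2 / c ^ 4 + b ^ 2 / d ^ 4 := by positivity
  have hcon' : a ^ 2 * d ^ 2 + b ^ 2 * c ^ 2 = c ^ 2 * d ^ 2 := by
    field_simp at hcon; linarith
  have hs : (c * Real.sqrt (c / (c + d))) ^ 2 = c ^ 3 / (c + d) := by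
    rw [mul_pow, Real.sq_sqrt (by positivity)]; ring
  have ht : (d * Real.sqrt (d / (c + d))) ^ 2 = d ^ 3 / (c + d) := by
    rw [mul_pow, Real.sq_sqrt (by positivity)]; ring
  have hspos : 0 < c * Real.sqrt (c / (c + d)) := by positivity
  have htpos : 0 < d * Real.sqrt (d / (c + d)) := by positivity
  constructor
  · intro h
    field_simp [hD.ne'] at h
    have key0 : (p:ℝ) * (a ^ 2 * c ^ 4) * (c ^ 6 * b ^ 4 - d ^ 6 * a ^ 4) = 0 := by
      linear_combination (a ^ 2 * c ^ 2) * h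
    have key : c ^ 3 * b ^ 2 = d ^ 3 * a ^ 2 := by
      have h4 : c ^ 6 * b ^ 4 - d ^ 6 * a ^ 4 = 0 := by
        rcases mul_eq_zero.mp key0 with h1 | h1
        · rcases mul_eq_zero.mp h1 with h2 | h2
          · exact absurd h2 (ne_of_gt hpR)
          · exact absurd h2 (by positivity)
        · exact h1
      have hsq : (c ^ 3 * b ^ 2) ^ 2 = (d ^ 3 * a ^ 2) ^ 2 := by nlinarith [h4]
      have h1 : 0 ≤ c ^ 3 * b ^ 2 := by positivity
      have h2 : 0 ≤ d ^ 3 * a ^ 2 := by positivity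
      calc c ^ 3 * b ^ 2 = Real.sqrt ((c ^ 3 * b ^ 2) ^ 2) := (Real.sqrt_sq h1).symm
        _ = Real.sqrt ((d ^ 3 * a ^ 2) ^ 2) := by rw [hsq]
        _ = d ^ 3 * a ^ 2 := Real.sqrt_sq h2
    have hx : a ^ 2 = c ^ 3 / (c + d) := by
      rw [eq_div_iff (ne_of_gt hcd)]
      have h2 : a ^ 2 * (c + d) * d ^ 2 = c ^ 3 * d ^ 2 := by
        linear_combination c * hcon' - key
      exact mul_right_cancel₀ (pow_ne_zero 2 hdne) h2
    have hy : b ^ 2 = d ^ 3 / (c + d) := by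
      rw [eq_div_iff (ne_of_gt hcd)]
      have h2 : b ^ 2 * (c + d) * c ^ 2 = d ^ 3 * c ^ 2 := by
        linear_combination d * hcon' + key
      exact mul_right_cancel₀ (pow_ne_zero 2 hcne) h2
    constructor
    · have : a ^ 2 = (c * Real.sqrt (c / (c + d))) ^ 2 := by rw [hs, hx]
      calc a = Real.sqrt (a ^ 2) := (Real.sqrt_sq ha.le).symm
        _ = Real.sqrt ((c * Real.sqrt (c / (c + d))) ^ 2) := by rw [this]
        _ = c * Real.sqrt (c / (c + d)) := Real.sqrt_sq hspos.le
    · have : b ^ 2 = (d * Real.sqrt (d / (c + d))) ^ 2 := by rw [ht, hy]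
      rcases sq_eq_sq_iff_eq_or_eq_neg.mp this with h1 | h1
      · exact Or.inl h1
      · exact Or.inr h1
  · rintro ⟨ha2, hb2⟩
    have hx : a ^ 2 = c ^ 3 / (c + d) := by rw [ha2, hs]
    have hy : b ^ 2 = d ^ 3 / (c + d) := by
      rcases hb2 with h1 | h1
      · rw [h1, ht]
      · rw [h1, neg_pow, ht]; ring
    rw [sub_eq_zero, show a ^ 4 = (a ^ 2) ^ 2 by ring, hx, hy]
    field_simp [hcne, hdne, hcd.ne']
end

section
/- Let $c,d,a>0$ and $b\neq 0$ with $a^2/c^2+b^2/d^2=1$, and let $m$ be a positive integer. Define $\nu = m\frac{c^2}{a^2}\frac{1}{\sqrt{c^4/a^2+d^4/b^2}}$. Then $\nu > 0$, and the expression $\frac{m c^4}{a^4} - \frac{1}{a^2/c^4+b^2/d^4}\left(\frac{c^2}{a^2}+\frac{d^2}{b^2}\right)\frac{m}{c^2}$ vanishes if and only if $a^2 = c^3/(c+d)$ and $b^2 = d^3/(c+d)$; in particular the vanishing condition is independent of $m$. -/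
theorem stmt_19 (c d a : ℝ) (b : ℝ) (hc : 0 < c) (hd : 0 < d) (ha : 0 < a) (hb : b ≠ 0)
    (hcon : a ^ 2 / c ^ 2 + b ^ 2 / d ^ 2 = 1) (m : ℕ) (hm : 0 < m) :
    0 < (m : ℝ) * (c ^ 2 / a ^ 2) * (1 / Real.sqrt (c ^ 4 / a ^ 2 + d ^ 4 / b ^ 2)) ∧
      ((m : ℝ) * c ^ 4 / a ^ 4 -
          (1 / (a ^ 2 / c ^ 4 + b ^ 2 / d ^ 4)) * (c ^ 2 / a ^ 2 + d ^ 2 / b ^ 2) *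
            ((m : ℝ) / c ^ 2) = 0 ↔
        a ^ 2 = c ^ 3 / (c + d) ∧ b ^ 2 = d ^ 3 / (c + d)) := by
  have hb2 : 0 < b ^ 2 := by positivity
  have hm' : (0:ℝ) < (m:ℝ) := by exact_mod_cast hm
  have hD : 0 < a ^ 2 / c ^ 4 + b ^ 2 / d ^ 4 := by positivity
  have hcd : 0 < c + d := by linarith
  have hcon' : a ^ 2 * d ^ 2 + b ^ 2 * c ^ 2 = c ^ 2 * d ^ 2 := by
    field_simp at hcon; linarith
  constructor
  · have hs : 0 < Real.sqrt (c ^ 4 / a ^ 2 + d ^ 4 / b ^ 2) := by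
      apply Real.sqrt_pos.mpr; positivity
    positivity
  · have key : ((m : ℝ) * c ^ 4 / a ^ 4 -
          (1 / (a ^ 2 / c ^ 4 + b ^ 2 / d ^ 4)) * (c ^ 2 / a ^ 2 + d ^ 2 / b ^ 2) *
            ((m : ℝ) / c ^ 2) = 0) ↔ c ^ 3 * b ^ 2 = d ^ 3 * a ^ 2 := by
      rw [sub_eq_zero]
      constructor
      · intro h
        field_simp at h
        have h' : (m:ℝ) * (c^6*a^2*b^2*(a^2*d^4+b^2*c^4)) =
            (m:ℝ) * (c^4*d^4*(c^2*b^2+d^2*a^2)*a^4) := by linear_combination (m:ℝ)*c^4*a^2 * h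
        have h'' := mul_left_cancel₀ (ne_of_gt hm') h'
        have h3 : (c^4*a^2) * (c^6*b^4) = (c^4*a^2) * (d^6*a^4) := by
          linear_combination h''
        have h4 : (c^3*b^2)^2 = (d^3*a^2)^2 :=
          mul_left_cancel₀ (by positivity : (c^4*a^2 : ℝ) ≠ 0) (by linear_combination h3)
        have huv : ∀ u v : ℝ, 0 < u → 0 < v → u^2 = v^2 → u = v := by
          intro u v hu hv h5
          nlinarith [sq_nonneg (u - v), sq_nonneg (u + v), mul_pos hu hv]
        exact huv _ _ (by positivity) (by positivity) h4
      · intro h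
        field_simp
        linear_combination (c^3*b^2 + d^3*a^2) * h
    rw [key]
    constructor
    · intro h
      have hx : a ^ 2 * (c + d) * d ^ 2 = c ^ 3 * d ^ 2 := by
        linear_combination c * hcon' - h
      have hx' : a ^ 2 * (c + d) = c ^ 3 :=
        mul_right_cancel₀ (by positivity) hx
      have hy : b ^ 2 * (c + d) * c ^ 2 = d ^ 3 * c ^ 2 := by
        linear_combination d * hcon' + h
      have hy' : b ^ 2 * (c + d) = d ^ 3 :=
        mul_right_cancel₀ (by positivity) hy
      constructor
      · rw [eq_div_iff (ne_of_gt hcd)]; linarith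
      · rw [eq_div_iff (ne_of_gt hcd)]; linarith
    · rintro ⟨h1, h2⟩
      rw [h1, h2]
      field_simp
end
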